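/- Lyapunov-Krasovskii sufficient condition (delay-independent): suppose there exist symmetric positive definite matrices P, Q ∈ ℝ^{n×n} such that the block matrix [[AᵀP + PA + Q, PM], [MᵀP, −Q]] is negative definite. Then V(x_t) = x(t)ᵀ P x(t) + ∫_{t−h}^{t} x(s)ᵀ Q x(s) ds satisfies dV/dt ≤ −ε‖(x(t), x(t−h))‖² along solutions of ẋ(t) = A x(t) + M x(t−h) for some ε > 0. -/

import Mathlib

open Filter Topology Set Matrix

lemma posdef_bound {ι : Type} [Fintype ι] [DecidableEq ι] {N : Matrix ι ι ℝ}
    (hN : N.PosDef) :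
    ∃ ε > (0:ℝ), ∀ ξ : ι → ℝ, ε * (∑ i, ξ i ^ 2) ≤ ξ ⬝ᵥ N *ᵥ ξ := by
  set T := Matrix.toEuclideanCLM (𝕜 := ℝ) N with hT
  set f : EuclideanSpace ℝ ι → ℝ := fun v => inner (𝕜 := ℝ) v (T v) with hf
  have hfc : Continuous f := continuous_id.inner T.continuous
  have hfval : ∀ ξ : ι → ℝ, f ((WithLp.equiv 2 (ι → ℝ)).symm ξ) = ξ ⬝ᵥ N *ᵥ ξ := by
    intro ξ
    simp only [hf, hT, Matrix.inner_toEuclideanCLM]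
    rfl
  have hnorm : ∀ ξ : ι → ℝ, ‖(WithLp.equiv 2 (ι → ℝ)).symm ξ‖ ^ 2 = ∑ i, ξ i ^ 2 := by
    intro ξ
    rw [EuclideanSpace.norm_eq, Real.sq_sqrt (by positivity)]
    simp [sq]
  have hpos : ∀ v : EuclideanSpace ℝ ι, v ≠ 0 → 0 < f v := by
    intro v hv
    have := hN.dotProduct_mulVec_pos (x := WithLp.equiv 2 (ι → ℝ) v) (by simpa using hv)
    simpa [hf, hT, Matrix.inner_toEuclideanCLM] using this
  cases isEmpty_or_nonempty ι with
  | inl hemp =>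
    exact ⟨1, one_pos, fun ξ => by simp [dotProduct]⟩
  | inr hne =>
    have hsc : IsCompact (Metric.sphere (0 : EuclideanSpace ℝ ι) 1) :=
      isCompact_sphere _ _
    have hsn : (Metric.sphere (0 : EuclideanSpace ℝ ι) 1).Nonempty :=
      NormedSpace.sphere_nonempty.mpr zero_le_one
    obtain ⟨v₀, hv₀s, hv₀min⟩ := hsc.exists_isMinOn hsn hfc.continuousOn
    have hv₀norm : ‖v₀‖ = 1 := by simpa using hv₀s
    have hv₀ne : v₀ ≠ 0 := by intro h0; rw [h0] at hv₀norm; simp at hv₀norm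
    refine ⟨f v₀, hpos v₀ hv₀ne, fun ξ => ?_⟩
    set v : EuclideanSpace ℝ ι := (WithLp.equiv 2 (ι → ℝ)).symm ξ with hv
    simp only [← hfval ξ, ← hnorm ξ, ← hv]
    rcases eq_or_ne v 0 with h0 | h0
    · have : ξ = 0 := by
        have := congrArg (WithLp.equiv 2 (ι → ℝ)) (hv ▸ h0); simpa using this
      rw [hv, this]; simp [hf]
    · have hvn : ‖v‖ ≠ 0 := norm_ne_zero_iff.mpr h0
      have hw : (‖v‖⁻¹ • v) ∈ Metric.sphere (0 : EuclideanSpace ℝ ι) 1 := by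
        simp [norm_smul, abs_of_nonneg (norm_nonneg v), inv_mul_cancel₀ hvn]
      have hle : f v₀ ≤ f (‖v‖⁻¹ • v) := hv₀min hw
      have hscale : f (‖v‖⁻¹ • v) = ‖v‖⁻¹ * ‖v‖⁻¹ * f v := by
        simp only [hf, _root_.map_smul, real_inner_smul_left, real_inner_smul_right,
          PiLp.inner_apply, RCLike.inner_apply, conj_trivial, Finset.mul_sum]
        exact Finset.sum_congr rfl fun i _ => by simp [PiLp.smul_apply, smul_eq_mul]; ring
      rw [hscale] at hle
      have h2 : f v₀ * ‖v‖ ^ 2 ≤ f v := by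
        have hvp : (0:ℝ) < ‖v‖ := lt_of_le_of_ne (norm_nonneg v) (Ne.symm hvn)
        rw [sq]
        calc f v₀ * (‖v‖ * ‖v‖) ≤ ‖v‖⁻¹ * ‖v‖⁻¹ * f v * (‖v‖ * ‖v‖) := by
              nlinarith [sq_nonneg ‖v‖]
          _ = f v := by field_simp
      linarith


noncomputable section

abbrev Vec (n : ℕ) := EuclideanSpace ℝ (Fin n)

abbrev Seg (n : ℕ) (h : ℝ) := C(Set.Icc (-h) (0:ℝ), Vec n)

/-- Action of a matrix on a Euclidean vector. -/
def mapp {n : ℕ} (A : Matrix (Fin n) (Fin n) ℝ) (v : Vec n) : Vec n :=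
  Matrix.toEuclideanCLM (𝕜 := ℝ) A v

/-- `x` is a solution of the delay system `ẋ(t) = A x(t) + M x(t-h)` with
initial segment `φ` on `[-h, 0]`. -/
def IsSol {n : ℕ} (A M : Matrix (Fin n) (Fin n) ℝ) (h : ℝ)
    (φ : Seg n h) (x : ℝ → Vec n) : Prop :=
  ContinuousOn x (Set.Ici (-h)) ∧
  (∀ θ : Set.Icc (-h) (0:ℝ), x θ = φ θ) ∧
  ∀ t > 0, HasDerivAt x (mapp A (x t) + mapp M (x (t - h))) t

/-- `ℓ_t`: sup of `‖x(t)‖` over solutions with unit-norm initial segment. -/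
def ell {n : ℕ} (A M : Matrix (Fin n) (Fin n) ℝ) (h : ℝ) (t : ℝ) : ℝ :=
  sSup {r | ∃ (φ : Seg n h) (x : ℝ → Vec n), ‖φ‖ = 1 ∧ IsSol A M h φ x ∧ r = ‖x t‖}

lemma inner_mapp {n : ℕ} (N : Matrix (Fin n) (Fin n) ℝ) (u w : Vec n) :
    inner (𝕜 := ℝ) u (mapp N w) = (fun i => u i) ⬝ᵥ N *ᵥ (fun i => w i) := by
  exact Matrix.inner_toEuclideanCLM N u w

/-- Lyapunov–Krasovskii sufficient condition (delay-independent): if the block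
matrix `[[AᵀP + PA + Q, PM], [MᵀP, −Q]]` is negative definite, then the
Lyapunov–Krasovskii functional decreases at rate `−ε‖(x(t), x(t−h))‖²`. -/
theorem stmt15 (n : ℕ) (h : ℝ) (hh : 0 < h)
    (A M P Q : Matrix (Fin n) (Fin n) ℝ)
    (hP : P.PosDef) (hQ : Q.PosDef)
    (hblock : (-(Matrix.fromBlocks (A.transpose * P + P * A + Q) (P * M)
      (M.transpose * P) (-Q))).PosDef) :
    ∃ ε > (0:ℝ), ∀ (φ : Seg n h) (x : ℝ → Vec n), IsSol A M h φ x →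
      ∀ t > (0:ℝ), ∀ d : ℝ,
        HasDerivAt (fun u => inner (𝕜 := ℝ) (x u) (mapp P (x u)) +
          ∫ s in (u - h)..u, inner (𝕜 := ℝ) (x s) (mapp Q (x s))) d t →
        d ≤ -ε * (‖x t‖ ^ 2 + ‖x (t - h)‖ ^ 2) := by
  
  obtain ⟨ε, hε, hbd⟩ := posdef_bound hblock
  refine ⟨ε, hε, ?_⟩
  rintro φ x ⟨hcont, -, hder⟩ t ht d hd
  have hxt : HasDerivAt x (mapp A (x t) + mapp M (x (t - h))) t := hder t ht
  set f : ℝ → ℝ := fun s => inner (𝕜 := ℝ) (x s) (mapp Q (x s)) with hfdef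
  -- continuity of f
  have hfc : ContinuousOn f (Set.Ici (-h)) := by
    exact hcont.inner ((Matrix.toEuclideanCLM (𝕜 := ℝ) Q).continuous.comp_continuousOn hcont)
  have hfio : ContinuousOn f (Set.Ioi (-h)) := hfc.mono Set.Ioi_subset_Ici_self
  have hint : ∀ u, -h ≤ u → IntervalIntegrable f MeasureTheory.volume (-h) u := by
    intro u hu
    exact (hfc.mono (by rw [Set.uIcc_of_le hu]; exact Set.Icc_subset_Ici_self)).intervalIntegrable
  have hth : -h < t := by linarith
  have hth' : -h < t - h := by linarith
  -- derivative of the integral part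
  have hF1 : HasDerivAt (fun u => ∫ s in (-h)..u, f s) (f t) t :=
    intervalIntegral.integral_hasDerivAt_right (hint t hth.le)
      (hfio.stronglyMeasurableAtFilter isOpen_Ioi t hth)
      (hfc.continuousAt (Ici_mem_nhds hth))
  have hG : HasDerivAt (fun y => ∫ s in (-h)..y, f s) (f (t - h)) (t - h) :=
    intervalIntegral.integral_hasDerivAt_right (hint (t - h) hth'.le)
      (hfio.stronglyMeasurableAtFilter isOpen_Ioi (t - h) hth')
      (hfc.continuousAt (Ici_mem_nhds hth'))
  have hF2 : HasDerivAt (fun u => ∫ s in (-h)..(u - h), f s) (f (t - h)) t := by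
    have := hG.comp t ((hasDerivAt_id t).sub_const h)
    simpa [Function.comp_def] using this
  have hev : (fun u => ∫ s in (u - h)..u, f s) =ᶠ[nhds t]
      (fun u => (∫ s in (-h)..u, f s) - ∫ s in (-h)..(u - h), f s) := by
    filter_upwards [Ioi_mem_nhds ht] with u hu
    rw [intervalIntegral.integral_interval_sub_left (hint u (by linarith [Set.mem_Ioi.mp hu]))
      (hint (u - h) (by simp at hu; linarith))]
  have hFint : HasDerivAt (fun u => ∫ s in (u - h)..u, f s) (f t - f (t - h)) t :=
    HasDerivAt.congr_of_eventuallyEq (hF1.sub hF2) hev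
  -- derivative of the quadratic part
  have hPx : HasDerivAt (fun u => mapp P (x u))
      (mapp P (mapp A (x t) + mapp M (x (t - h)))) t :=
    (Matrix.toEuclideanCLM (𝕜 := ℝ) P).hasFDerivAt.comp_hasDerivAt t hxt
  have hquad : HasDerivAt (fun u => inner (𝕜 := ℝ) (x u) (mapp P (x u)))
      (inner (𝕜 := ℝ) (x t) (mapp P (mapp A (x t) + mapp M (x (t - h)))) +
       inner (𝕜 := ℝ) (mapp A (x t) + mapp M (x (t - h))) (mapp P (x t))) t :=
    hxt.inner ℝ hPx
  have hV := hquad.add hFint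
  have hdeq : d = inner (𝕜 := ℝ) (x t) (mapp P (mapp A (x t) + mapp M (x (t - h)))) +
       inner (𝕜 := ℝ) (mapp A (x t) + mapp M (x (t - h))) (mapp P (x t)) +
       (f t - f (t - h)) := hd.unique hV
  -- the algebra
  set af : Fin n → ℝ := fun i => x t i with haf
  set bf : Fin n → ℝ := fun i => x (t - h) i with hbf
  set ξ : Fin n ⊕ Fin n → ℝ := Sum.elim af bf with hξ
  have hkey := hbd ξ
  have hnorm : (∑ i, ξ i ^ 2) = ‖x t‖ ^ 2 + ‖x (t - h)‖ ^ 2 := by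
    rw [hξ, Fintype.sum_sum_type]
    simp only [Sum.elim_inl, Sum.elim_inr]
    rw [EuclideanSpace.norm_eq, EuclideanSpace.norm_eq,
      Real.sq_sqrt (by positivity), Real.sq_sqrt (by positivity)]
    simp [haf, hbf, sq]
  have hquadform : d = ξ ⬝ᵥ (Matrix.fromBlocks (A.transpose * P + P * A + Q) (P * M)
      (M.transpose * P) (-Q)) *ᵥ ξ := by
    rw [hdeq, hξ, Matrix.fromBlocks_mulVec, sumElim_dotProduct_sumElim]
    simp only [Sum.elim_comp_inl, Sum.elim_comp_inr]
    rw [hfdef]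
    simp only [inner_mapp]
    have hmapadd : (fun i => (mapp A (x t) + mapp M (x (t - h))) i) =
        A *ᵥ af + M *ᵥ bf := rfl
    rw [hmapadd]
    simp only [← haf, ← hbf, Matrix.add_mulVec, Matrix.mulVec_add, dotProduct_add,
      add_dotProduct, Matrix.neg_mulVec, dotProduct_neg,
      ← Matrix.mulVec_mulVec, Matrix.dotProduct_mulVec (v := af) (w := P *ᵥ (A *ᵥ af)),
      Matrix.vecMul_transpose]
    rw [Matrix.dotProduct_mulVec af A.transpose, Matrix.vecMul_transpose,
      Matrix.dotProduct_mulVec bf M.transpose, Matrix.vecMul_transpose]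
    ring
  have hneg : ξ ⬝ᵥ (Matrix.fromBlocks (A.transpose * P + P * A + Q) (P * M)
      (M.transpose * P) (-Q)) *ᵥ ξ ≤ -ε * (∑ i, ξ i ^ 2) := by
    have := hbd ξ
    rw [Matrix.neg_mulVec, dotProduct_neg] at this
    linarith
  rw [hquadform, ← hnorm]
  exact hneg
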